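/- For a fixed β ∈ (0,1], the Conditional Value-at-Risk CVaR_β is a coherent risk measure on integrable real-valued random variables on a probability space (Ω, F, P): (i) subadditivity: CVaR_β(X + X') ≤ CVaR_β(X) + CVaR_β(X') for all integrable X, X'; (ii) monotonicity: if X(ω) ≤ X'(ω) for all ω ∈ Ω, then CVaR_β(X) ≤ CVaR_β(X'); (iii) translational invariance: CVaR_β(X + c) = CVaR_β(X) + c for all c ∈ ℝ; (iv) positive homogeneity: CVaR_β(c·X) = c·CVaR_β(X) for all c ≥ 0. -/

import Mathlib

open MeasureTheory

/-- Conditional Value-at-Risk at level `β`: `CVaR_β(X) := inf_z E[z + (X - z)⁺ / β]`. -/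
noncomputable def CVaR {Ω : Type*} [MeasurableSpace Ω] (P : Measure Ω) (β : ℝ) (X : Ω → ℝ) : ℝ :=
  ⨅ z : ℝ, (z + (∫ ω, max (X ω - z) 0 ∂P) / β)

section Aux

variable {Ω : Type*} [MeasurableSpace Ω] (P : Measure Ω) [IsProbabilityMeasure P]

lemma cvar_intMax {X : Ω → ℝ} (hX : Integrable X P) (z : ℝ) :
    Integrable (fun ω => max (X ω - z) 0) P :=
  (hX.sub (integrable_const z)).pos_part

lemma cvar_lb {β : ℝ} (hβ0 : 0 < β) (hβ1 : β ≤ 1) {X : Ω → ℝ} (hX : Integrable X P) (z : ℝ) :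
    ∫ ω, X ω ∂P ≤ z + (∫ ω, max (X ω - z) 0 ∂P) / β := by
  have h1 : (∫ ω, X ω ∂P) - z ≤ ∫ ω, max (X ω - z) 0 ∂P := by
    have := integral_mono (hX.sub (integrable_const z)) (cvar_intMax P hX z)
      (fun ω => le_max_left _ _)
    simpa [integral_sub hX (integrable_const z)] using this
  have h2 : 0 ≤ ∫ ω, max (X ω - z) 0 ∂P := integral_nonneg fun ω => le_max_right _ _
  have h3 : ∫ ω, max (X ω - z) 0 ∂P ≤ (∫ ω, max (X ω - z) 0 ∂P) / β := by
    rw [le_div_iff₀ hβ0]; nlinarith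
  linarith

lemma cvar_bdd {β : ℝ} (hβ0 : 0 < β) (hβ1 : β ≤ 1) {X : Ω → ℝ} (hX : Integrable X P) :
    BddBelow (Set.range fun z : ℝ => z + (∫ ω, max (X ω - z) 0 ∂P) / β) := by
  refine ⟨∫ ω, X ω ∂P, ?_⟩
  rintro y ⟨z, rfl⟩
  exact cvar_lb P hβ0 hβ1 hX z

end Aux

/-- `CVaR_β` is a coherent risk measure on integrable random variables:
subadditive, monotone, translationally invariant and positively homogeneous. -/
theorem stmt_5 {Ω : Type*} [MeasurableSpace Ω] (P : Measure Ω) [IsProbabilityMeasure P]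
    {β : ℝ} (hβ : β ∈ Set.Ioc (0 : ℝ) 1) :
    (∀ X X' : Ω → ℝ, Integrable X P → Integrable X' P →
      CVaR P β (fun ω => X ω + X' ω) ≤ CVaR P β X + CVaR P β X') ∧
    (∀ X X' : Ω → ℝ, Integrable X P → Integrable X' P → (∀ ω, X ω ≤ X' ω) →
      CVaR P β X ≤ CVaR P β X') ∧
    (∀ X : Ω → ℝ, Integrable X P → ∀ c : ℝ,
      CVaR P β (fun ω => X ω + c) = CVaR P β X + c) ∧
    (∀ X : Ω → ℝ, Integrable X P → ∀ c : ℝ, 0 ≤ c →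
      CVaR P β (fun ω => c * X ω) = c * CVaR P β X) := by
  obtain ⟨hβ0, hβ1⟩ := hβ
  refine ⟨?_, ?_, ?_, ?_⟩
  · -- subadditivity
    intro X X' hX hX'
    have hS : Integrable (fun ω => X ω + X' ω) P := hX.add hX'
    have key : ∀ z z' : ℝ,
        CVaR P β (fun ω => X ω + X' ω)
          ≤ (z + (∫ ω, max (X ω - z) 0 ∂P) / β) + (z' + (∫ ω, max (X' ω - z') 0 ∂P) / β) := by
      intro z z'
      have h1 : CVaR P β (fun ω => X ω + X' ω)
          ≤ (z + z') + (∫ ω, max (X ω + X' ω - (z + z')) 0 ∂P) / β :=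
        ciInf_le (cvar_bdd P hβ0 hβ1 hS) (z + z')
      have h2 : ∫ ω, max (X ω + X' ω - (z + z')) 0 ∂P
          ≤ (∫ ω, max (X ω - z) 0 ∂P) + ∫ ω, max (X' ω - z') 0 ∂P := by
        rw [← integral_add (cvar_intMax P hX z) (cvar_intMax P hX' z')]
        refine integral_mono (cvar_intMax P hS (z + z'))
          ((cvar_intMax P hX z).add (cvar_intMax P hX' z')) (fun ω => ?_)
        have ha := le_max_left (X ω - z) 0
        have hb := le_max_left (X' ω - z') 0
        have ha' := le_max_right (X ω - z) 0
        have hb' := le_max_right (X' ω - z') 0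
        have : max (X ω + X' ω - (z + z')) 0 ≤ max (X ω - z) 0 + max (X' ω - z') 0 :=
          max_le (by linarith) (by linarith)
        exact this
      have h3 : (∫ ω, max (X ω + X' ω - (z + z')) 0 ∂P) / β
          ≤ ((∫ ω, max (X ω - z) 0 ∂P) + ∫ ω, max (X' ω - z') 0 ∂P) / β := by
        gcongr
      rw [add_div] at h3
      linarith
    have step1 : ∀ z : ℝ,
        CVaR P β (fun ω => X ω + X' ω) - (z + (∫ ω, max (X ω - z) 0 ∂P) / β) ≤ CVaR P β X' := by
      intro z
      refine le_ciInf fun z' => ?_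
      have := key z z'
      linarith
    have : CVaR P β (fun ω => X ω + X' ω) - CVaR P β X' ≤ CVaR P β X :=
      le_ciInf fun z => by linarith [step1 z]
    linarith
  · -- monotonicity
    intro X X' hX hX' hle
    refine ciInf_mono (cvar_bdd P hβ0 hβ1 hX) fun z => ?_
    have : ∫ ω, max (X ω - z) 0 ∂P ≤ ∫ ω, max (X' ω - z) 0 ∂P :=
      integral_mono (cvar_intMax P hX z) (cvar_intMax P hX' z)
        (fun ω => max_le_max (by linarith [hle ω]) le_rfl)
    gcongr
  · -- translation invariance
    intro X hX c
    have hXc : Integrable (fun ω => X ω + c) P := hX.add (integrable_const c)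
    have hfun : ∀ z : ℝ, (z + (∫ ω, max (X ω + c - z) 0 ∂P) / β)
        = ((z - c) + (∫ ω, max (X ω - (z - c)) 0 ∂P) / β) + c := by
      intro z
      have : (fun ω => max (X ω + c - z) 0) = fun ω => max (X ω - (z - c)) 0 := by
        funext ω; ring_nf
      rw [this]; ring
    have hbddX := cvar_bdd P hβ0 hβ1 hX
    unfold CVaR
    refine le_antisymm ?_ ?_
    · rw [← sub_le_iff_le_add]
      refine le_ciInf fun z => ?_
      rw [sub_le_iff_le_add]
      calc ⨅ z : ℝ, (z + (∫ ω, max (X ω + c - z) 0 ∂P) / β)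
          ≤ (z + c) + (∫ ω, max (X ω + c - (z + c)) 0 ∂P) / β :=
            ciInf_le (cvar_bdd P hβ0 hβ1 hXc) (z + c)
        _ = (z + (∫ ω, max (X ω - z) 0 ∂P) / β) + c := by
            rw [hfun (z + c)]; simp
    · refine le_ciInf fun z => ?_
      rw [hfun z]
      exact add_le_add_left (ciInf_le hbddX (z - c)) c
  · -- positive homogeneity
    intro X hX c hc
    rcases eq_or_lt_of_le hc with rfl | hc0
    · -- c = 0
      have h0 : (fun ω => (0:ℝ) * X ω) = fun _ => (0:ℝ) := by funext ω; ring
      rw [h0]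
      have hfun : ∀ z : ℝ, (z + (∫ (_ : Ω), max ((0:ℝ) - z) 0 ∂P) / β) = z + max (-z) 0 / β := by
        intro z; simp
      have hbdd : BddBelow (Set.range fun z : ℝ => z + (∫ (_ : Ω), max ((0:ℝ) - z) 0 ∂P) / β) :=
        cvar_bdd P hβ0 hβ1 (integrable_const 0)
      unfold CVaR
      refine le_antisymm ?_ ?_
      · have := ciInf_le hbdd 0
        simpa using this
      · refine le_ciInf fun z => ?_
        rw [hfun z]
        rw [zero_mul]
        rcases le_total z 0 with h | h
        · have hm : max (-z) 0 = -z := max_eq_left (by linarith)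
          rw [hm]
          have h1β : -z ≤ -z / β := by rw [le_div_iff₀ hβ0]; nlinarith
          linarith
        · have hm : max (-z) 0 = 0 := max_eq_right (by linarith)
          rw [hm]
          simp [h]
    · -- c > 0
      have hcX : Integrable (fun ω => c * X ω) P := hX.const_mul c
      have hfun : ∀ z : ℝ, (z + (∫ ω, max (c * X ω - z) 0 ∂P) / β)
          = c * ((z / c) + (∫ ω, max (X ω - z / c) 0 ∂P) / β) := by
        intro z
        have hmax : (fun ω => max (c * X ω - z) 0) = fun ω => c * max (X ω - z / c) 0 := by
          funext ω
          rw [mul_max_of_nonneg _ _ hc, mul_zero]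
          congr 1
          field_simp
        rw [hmax, integral_const_mul]
        field_simp
      have hbddX := cvar_bdd P hβ0 hβ1 hX
      unfold CVaR
      refine le_antisymm ?_ ?_
      · -- ⨅ ≤ c * ⨅
        set A := ⨅ z : ℝ, (z + (∫ ω, max (c * X ω - z) 0 ∂P) / β) with hA
        have hAle : ∀ w : ℝ, A ≤ c * (w + (∫ ω, max (X ω - w) 0 ∂P) / β) := by
          intro w
          have h1 : A ≤ (c * w) + (∫ ω, max (c * X ω - (c * w)) 0 ∂P) / β :=
            ciInf_le (cvar_bdd P hβ0 hβ1 hcX) (c * w)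
          have h2 := hfun (c * w)
          rw [mul_div_cancel_left₀ _ (ne_of_gt hc0)] at h2
          linarith [h1.trans_eq h2]
        have : A / c ≤ ⨅ z : ℝ, (z + (∫ ω, max (X ω - z) 0 ∂P) / β) := by
          refine le_ciInf fun w => ?_
          rw [div_le_iff₀ hc0]
          have := hAle w
          linarith [this]
        calc A = c * (A / c) := by field_simp
          _ ≤ c * ⨅ z : ℝ, (z + (∫ ω, max (X ω - z) 0 ∂P) / β) :=
            mul_le_mul_of_nonneg_left this hc
      · refine le_ciInf fun z => ?_
        rw [hfun z]
        exact mul_le_mul_of_nonneg_left (ciInf_le hbddX (z / c)) hc
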